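/- Every finite simple triangle-free 4-regular graph on exactly 10 vertices contains a set of 6 vertices inducing a forest; that is, a(G) ≥ 6 for every such graph G. -/

import Mathlib

open SimpleGraph Finset

lemma cycle_two_neighbors' {V : Type*} [DecidableEq V] {H : SimpleGraph V} {u a : V}
    {c : H.Walk u u} (hc : c.IsCycle) (ha : a ∈ c.support) :
    ∃ b₁ b₂ : V, b₁ ≠ b₂ ∧ H.Adj a b₁ ∧ H.Adj a b₂ := by
  have hc' : (c.rotate a ha).IsCycle := hc.rotate ha
  obtain ⟨b₁, hadj, p, heq⟩ := SimpleGraph.Walk.not_nil_iff.mp hc'.not_nil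
  rw [heq, Walk.cons_isCycle_iff] at hc'
  obtain ⟨b₂, hadj₂, q, heq₂⟩ :=
    SimpleGraph.Walk.not_nil_iff.mp (Walk.not_nil_of_ne (show a ≠ b₁ from hadj.ne) (p := p.reverse))
  have hmem : s(a, b₂) ∈ p.edges := by
    have h1 : s(a, b₂) ∈ p.reverse.edges := by rw [heq₂]; simp
    simpa [Walk.edges_reverse] using h1
  refine ⟨b₁, b₂, ?_, hadj, hadj₂⟩
  rintro rfl
  exact hc'.2 hmem

/-- **Triangle-free 4-regular graphs on 10 vertices have an induced forest on 6 vertices.**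
Every finite simple triangle-free `4`-regular graph on exactly `10` vertices contains a
set of `6` vertices inducing a forest, i.e. `a(G) ≥ 6` for every such graph. -/
theorem acyclic_set_six_of_triangle_free_four_regular_ten {V : Type*} [Fintype V]
    (G : SimpleGraph V) [DecidableRel G.Adj] (hG : G.CliqueFree 3)
    (hreg : G.IsRegularOfDegree 4) (hcard : Fintype.card V = 10) :
    ∃ S : Finset V, (G.induce (S : Set V)).IsAcyclic ∧ 6 ≤ S.card := by
  classical
  have hV : Nonempty V := by
    rw [← Fintype.card_pos_iff, hcard]; norm_num
  obtain ⟨v⟩ := hV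
  set I : Finset V := G.neighborFinset v with hI
  have hIcard : I.card = 4 := hreg v
  have hIind : ∀ a ∈ I, ∀ b ∈ I, ¬ G.Adj a b := by
    intro a ha b hb hab
    rw [hI, mem_neighborFinset] at ha hb
    exact hG {v, a, b} (is3Clique_triple_iff.mpr ⟨ha, hb, hab⟩)
  have hedge : ∃ x y, x ∉ I ∧ y ∉ I ∧ G.Adj x y := by
    by_contra hcon
    push_neg at hcon
    have hsub : ∀ u, u ∉ I → G.neighborFinset u = I := by
      intro u hu
      apply Finset.eq_of_subset_of_card_le
      · intro b hb
        by_contra hbI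
        exact hcon u b hu hbI ((mem_neighborFinset _ _ _).mp hb)
      · rw [hIcard]
        exact le_of_eq (hreg u).symm
    obtain ⟨a, haI⟩ : I.Nonempty := Finset.card_pos.mp (by omega)
    have hsub2 : Iᶜ ⊆ G.neighborFinset a := by
      intro u hu
      rw [Finset.mem_compl] at hu
      have h2 : a ∈ G.neighborFinset u := by rw [hsub u hu]; exact haI
      rw [mem_neighborFinset] at h2 ⊢
      exact h2.symm
    have h3 := Finset.card_le_card hsub2
    rw [Finset.card_compl, hIcard, hcard] at h3
    have h4 : (G.neighborFinset a).card = 4 := hreg a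
    omega
  obtain ⟨x, y, hxI, hyI, hxy⟩ := hedge
  have hnocommon : ∀ a, ¬(G.Adj a x ∧ G.Adj a y) := by
    rintro a ⟨h1, h2⟩
    exact hG {a, x, y} (is3Clique_triple_iff.mpr ⟨h1, h2, hxy⟩)
  refine ⟨insert x (insert y I), ?_, ?_⟩
  · intro u c hc
    -- find a vertex of the cycle whose image is in I
    have hnodup : c.support.tail.Nodup := hc.support_nodup
    have hlen : 3 ≤ c.support.tail.length := by
      have h4 := hc.three_le_length
      have h5 := c.length_support
      have h6 : c.support.tail.length = c.support.length - 1 := by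
        simp [List.length_tail]
      omega
    have hcard3 : 3 ≤ c.support.tail.toFinset.card := by
      rw [List.toFinset_card_of_nodup hnodup]; exact hlen
    have hex : ∃ a ∈ c.support.tail.toFinset, (a : V) ≠ x ∧ (a : V) ≠ y := by
      by_contra hcon
      push_neg at hcon
      have himg : c.support.tail.toFinset.image Subtype.val ⊆ {x, y} := by
        intro b hb
        obtain ⟨a, ha, rfl⟩ := Finset.mem_image.mp hb
        rcases em ((a : V) = x) with h | h
        · exact Finset.mem_insert.mpr (Or.inl h)
        · exact Finset.mem_insert.mpr (Or.inr (Finset.mem_singleton.mpr (hcon a ha h)))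
      have h6 := Finset.card_le_card himg
      rw [Finset.card_image_of_injective _ Subtype.coe_injective] at h6
      have h7 : ({x, y} : Finset V).card ≤ 2 := Finset.card_insert_le _ _ |>.trans (by simp)
      omega
    obtain ⟨a, haT, hax, hay⟩ := hex
    have haI : (a : V) ∈ I := by
      have h0 : (a : V) = x ∨ (a : V) = y ∨ (a : V) ∈ I := by
        simpa only [Finset.coe_insert, Set.mem_insert_iff, Finset.mem_coe] using a.2
      rcases h0 with h | h | h
      · exact absurd h hax
      · exact absurd h hay
      · exact h
    have hasup : a ∈ c.support := List.mem_of_mem_tail (List.mem_toFinset.mp haT)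
    obtain ⟨b₁, b₂, hb12, hab₁, hab₂⟩ := cycle_two_neighbors' hc hasup
    have hbmem : ∀ b : ↥((insert x (insert y I) : Finset V) : Set V),
        (G.induce ((insert x (insert y I) : Finset V) : Set V)).Adj a b →
        (b : V) = x ∨ (b : V) = y := by
      intro b hab
      have hadj : G.Adj (a : V) (b : V) := hab
      have hbS : (b : V) = x ∨ (b : V) = y ∨ (b : V) ∈ I := by
        simpa only [Finset.coe_insert, Set.mem_insert_iff, Finset.mem_coe] using b.2
      rcases hbS with h | h | h
      · exact Or.inl h
      · exact Or.inr h
      · exact absurd hadj (hIind _ haI _ h)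
    have h1 := hbmem b₁ hab₁
    have h2 := hbmem b₂ hab₂
    have hbne : (b₁ : V) ≠ (b₂ : V) := fun h => hb12 (Subtype.ext h)
    have hadj₁ : G.Adj (a : V) (b₁ : V) := hab₁
    have hadj₂ : G.Adj (a : V) (b₂ : V) := hab₂
    rcases h1 with h1 | h1 <;> rcases h2 with h2 | h2
    · exact hbne (h1.trans h2.symm)
    · exact hnocommon (a : V) ⟨by have h3 := hadj₁; rwa [h1] at h3, by have h3 := hadj₂; rwa [h2] at h3⟩
    · exact hnocommon (a : V) ⟨by have h3 := hadj₂; rwa [h2] at h3, by have h3 := hadj₁; rwa [h1] at h3⟩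
    · exact hbne (h1.trans h2.symm)
  · have hyI' : y ∉ I := hyI
    have hxmem : x ∉ insert y I := by
      simp only [Finset.mem_insert]
      push_neg
      exact ⟨hxy.ne, hxI⟩
    rw [Finset.card_insert_of_notMem hxmem, Finset.card_insert_of_notMem hyI', hIcard]
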